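/- Let r, d ∈ ℕ and let 0 ≤ k_1 < k_2 < … < k_d = r be integers. Let a function x ∈ L^{r,r}_{∞,∞}(ℝ₋) and a spline φ ∈ Φ_{r,d−2} satisfy ‖x^{(k_i)}‖ = ‖φ^{(k_i)}‖ for i = 2,…,d. Then ‖x^{(k_1)}‖ ≥ ‖φ^{(k_1)}‖, and equality holds only if x^{(k_1)} ≡ φ^{(k_1)} on ℝ₋. -/

import Mathlib

open Set

/-- The "norm" of the k-th derivative of `x` on the half-line `ℝ₋ = (-∞,0]`:
for `k < r` it is the (essential) sup of `|x^{(k)}|` on `ℝ₋` (derivatives taken within `ℝ₋`);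
for `k = r` it is the least Lipschitz constant of `x^{(r-1)}` on `ℝ₋`, which equals the
essential sup norm of the a.e. derivative `x^{(r)}`. -/
noncomputable def nrm (r k : ℕ) (x : ℝ → ℝ) : ℝ :=
  if k = r then
    sInf {L : ℝ | 0 ≤ L ∧ LipschitzOnWith (Real.toNNReal L)
      (iteratedDerivWithin (r - 1) x (Set.Iic 0)) (Set.Iic 0)}
  else
    sSup ((fun t => |iteratedDerivWithin k x (Set.Iic 0) t|) '' Set.Iic 0)

/-- The class `L^{r,r}_{∞,∞}(ℝ₋)` of `r`-monotone functions: `x` has derivatives up to order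
`r-1` on `ℝ₋`, `x^{(r-1)}` is Lipschitz on `ℝ₋` (equivalently, it is locally absolutely
continuous with essentially bounded a.e. derivative `x^{(r)}`), `x` is bounded,
`x^{(k)} ≥ 0` on `ℝ₋` for `k = 0,…,r-1`, and `x^{(r)} ≥ 0` a.e.
(equivalently, `x^{(r-1)}` is nondecreasing on `ℝ₋`). -/
def MemLrr (r : ℕ) (x : ℝ → ℝ) : Prop :=
  ContDiffOn ℝ (r - 1 : ℕ) x (Set.Iic 0) ∧
  (∃ L : NNReal, LipschitzOnWith L (iteratedDerivWithin (r - 1) x (Set.Iic 0)) (Set.Iic 0)) ∧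
  BddAbove ((fun t => |x t|) '' Set.Iic 0) ∧
  (∀ k, k < r → ∀ t ∈ Set.Iic (0 : ℝ), 0 ≤ iteratedDerivWithin k x (Set.Iic 0) t) ∧
  MonotoneOn (iteratedDerivWithin (r - 1) x (Set.Iic 0)) (Set.Iic 0)

/-- The spline `φ(a_1,…,a_s,l;t) = (l/r!) ∑_{j=1}^s (-1)^{j+1} (t+a_j)_+^r`
(here `a` is 0-indexed: `a 0 = a_1`, …, `a (s-1) = a_s`). -/
noncomputable def splineFun (r s : ℕ) (a : ℕ → ℝ) (l : ℝ) : ℝ → ℝ :=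
  fun t => (l / (Nat.factorial r : ℝ)) *
    ∑ j ∈ Finset.range s, (-1 : ℝ) ^ j * (max (t + a j) 0) ^ r

/-- `φ ∈ Φ_{r,n}`: `φ` is a spline of order `r` with `s` knots, `1 ≤ s ≤ n`,
`a_1 > a_2 > … > a_s > 0` and `l > 0`. -/
def IsSpline (r n : ℕ) (φ : ℝ → ℝ) : Prop :=
  ∃ s : ℕ, 1 ≤ s ∧ s ≤ n ∧
    ∃ (a : ℕ → ℝ) (l : ℝ),
      (∀ i j, i < j → j < s → a j < a i) ∧ (∀ j, j < s → 0 < a j) ∧ 0 < l ∧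
      φ = splineFun r s a l

/-- The tuple `(M_{k_lo},…,M_{k_d})` of positive numbers is admissible for
`L^{r,r}_{∞,∞}(ℝ₋)` and the orders `k_lo < … < k_d`. -/
def Admissible (r d lo : ℕ) (k : ℕ → ℕ) (M : ℕ → ℝ) : Prop :=
  ∃ x : ℝ → ℝ, MemLrr r x ∧ ∀ i, lo ≤ i → i ≤ d → nrm r (k i) x = M i

/-- Type 1 admissible set (for the tuple of orders `k_lo,…,k_d`, of length `d-lo+1`):
some spline in `Φ_{r,d-lo} \ Φ_{r,d-lo-1}` realizes the prescribed norms. -/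
def Type1 (r d lo : ℕ) (k : ℕ → ℕ) (M : ℕ → ℝ) : Prop :=
  Admissible r d lo k M ∧
  ∃ φ : ℝ → ℝ, IsSpline r (d - lo) φ ∧ ¬ IsSpline r (d - lo - 1) φ ∧
    ∀ i, lo ≤ i → i ≤ d → nrm r (k i) φ = M i

/-- Type 2 admissible set: some spline in `Φ_{r,d-lo-1}` realizes the prescribed norms. -/
def Type2 (r d lo : ℕ) (k : ℕ → ℕ) (M : ℕ → ℝ) : Prop :=
  Admissible r d lo k M ∧
  ∃ φ : ℝ → ℝ, IsSpline r (d - lo - 1) φ ∧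
    ∀ i, lo ≤ i → i ≤ d → nrm r (k i) φ = M i

/-- Type 3 admissible set: `k_lo = 0`, the set is not of Type 1, and some spline
`φ ∈ Φ_{r,d-lo}` plus a constant `C > 0` realizes the prescribed norms. -/
def Type3 (r d lo : ℕ) (k : ℕ → ℕ) (M : ℕ → ℝ) : Prop :=
  Admissible r d lo k M ∧ k lo = 0 ∧ ¬ Type1 r d lo k M ∧
  ∃ (φ : ℝ → ℝ) (C : ℝ), IsSpline r (d - lo) φ ∧ 0 < C ∧
    ∀ i, lo ≤ i → i ≤ d → nrm r (k i) (fun t => φ t + C) = M i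


/-- relu increments are monotone. -/
lemma relu_incr_mono1 {u v δ : ℝ} (huv : u ≤ v) (hδ : 0 ≤ δ) :
    max (u+δ) 0 - max u 0 ≤ max (v+δ) 0 - max v 0 := by
  rcases le_total (u+δ) 0 with h1 | h1 <;> rcases le_total u 0 with h2 | h2 <;>
    rcases le_total (v+δ) 0 with h3 | h3 <;> rcases le_total v 0 with h4 | h4 <;>
    simp [max_eq_left, max_eq_right, *] <;> nlinarith

lemma relu_incr_nonneg {u δ : ℝ} (hδ : 0 ≤ δ) : 0 ≤ max (u+δ) 0 - max u 0 := by
  rcases le_total (u+δ) 0 with h1 | h1 <;> rcases le_total u 0 with h2 | h2 <;>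
    simp [max_eq_left, max_eq_right, *] <;> nlinarith

lemma relu_incr_le {u δ : ℝ} (hδ : 0 ≤ δ) : max (u+δ) 0 - max u 0 ≤ δ := by
  rcases le_total (u+δ) 0 with h1 | h1 <;> rcases le_total u 0 with h2 | h2 <;>
    simp [max_eq_left, max_eq_right, *] <;> nlinarith

/-- increments of `x ↦ (max x 0)^q` are monotone. -/
lemma reluPow_incr_mono {q : ℕ} (hq : 1 ≤ q) {u v δ : ℝ} (huv : u ≤ v) (hδ : 0 ≤ δ) :
    (max (u+δ) 0)^q - (max u 0)^q ≤ (max (v+δ) 0)^q - (max v 0)^q := by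
  set A := max (u+δ) 0 with hA
  set B := max u 0 with hB
  set A' := max (v+δ) 0 with hA'
  set B' := max v 0 with hB'
  have hB0 : 0 ≤ B := le_max_right _ _
  have hB'0 : 0 ≤ B' := le_max_right _ _
  have hBA : B ≤ A := by
    apply max_le_max _ le_rfl; linarith
  have hBB' : B ≤ B' := max_le_max huv le_rfl
  have hAA' : A ≤ A' := max_le_max (by linarith) le_rfl
  have hincr : A - B ≤ A' - B' := relu_incr_mono1 huv hδ
  have e1 : A^q - B^q = (∑ i ∈ Finset.range q, A ^ i * B ^ (q - 1 - i)) * (A - B) :=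
    (geom_sum₂_mul A B q).symm
  have e2 : A'^q - B'^q = (∑ i ∈ Finset.range q, A' ^ i * B' ^ (q - 1 - i)) * (A' - B') :=
    (geom_sum₂_mul A' B' q).symm
  have hS : (∑ i ∈ Finset.range q, A ^ i * B ^ (q - 1 - i)) ≤
      (∑ i ∈ Finset.range q, A' ^ i * B' ^ (q - 1 - i)) := by
    apply Finset.sum_le_sum
    intro i _
    apply mul_le_mul (pow_le_pow_left₀ (by linarith) hAA' i)
      (pow_le_pow_left₀ hB0 hBB' _) (pow_nonneg hB0 _) (pow_nonneg (by linarith) _)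
  have hSnn : 0 ≤ (∑ i ∈ Finset.range q, A ^ i * B ^ (q - 1 - i)) := by
    apply Finset.sum_nonneg; intro i _
    exact mul_nonneg (pow_nonneg (by linarith) _) (pow_nonneg hB0 _)
  rw [e1, e2]
  have h1 : (∑ i ∈ Finset.range q, A ^ i * B ^ (q - 1 - i)) * (A - B) ≤
      (∑ i ∈ Finset.range q, A' ^ i * B' ^ (q - 1 - i)) * (A - B) :=
    mul_le_mul_of_nonneg_right hS (by linarith)
  have h2 : (∑ i ∈ Finset.range q, A' ^ i * B' ^ (q - 1 - i)) * (A - B) ≤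
      (∑ i ∈ Finset.range q, A' ^ i * B' ^ (q - 1 - i)) * (A' - B') :=
    mul_le_mul_of_nonneg_left hincr (le_trans hSnn hS)
  linarith

/-- derivative of relu power, q ≥ 2. -/
lemma hasDerivAt_reluPow {p : ℕ} (hp : 2 ≤ p) (c t : ℝ) :
    HasDerivAt (fun s => (max (s + c) 0)^p) (p * (max (t+c) 0)^(p-1)) t := by
  rcases lt_trichotomy (t + c) 0 with h | h | h
  · have hev : (fun s : ℝ => (max (s + c) 0)^p) =ᶠ[nhds t] (fun _ => (0:ℝ)) := by
      have : ∀ᶠ s in nhds t, s + c < 0 := by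
        have : Continuous (fun s : ℝ => s + c) := by continuity
        exact this.continuousAt.eventually_lt_const h
      filter_upwards [this] with s hs
      rw [max_eq_right hs.le, zero_pow (by omega)]
    have h0 : HasDerivAt (fun _ : ℝ => (0:ℝ)) 0 t := hasDerivAt_const t 0
    have := h0.congr_of_eventuallyEq hev
    rw [max_eq_right h.le, zero_pow (by omega), mul_zero]
    exact this
  · -- kink point
    have h0 : max (t + c) 0 = 0 := by rw [h]; simp
    rw [h0, zero_pow (by omega), mul_zero]
    rw [hasDerivAt_iff_tendsto_slope]
    have hbound : ∀ s : ℝ, s ≠ t → |slope (fun s => (max (s + c) 0)^p) t s| ≤ |s - t|^(p-1) := by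
      intro s hs
      rw [slope_def_field]
      rw [div_eq_mul_inv, abs_mul, abs_inv]
      have h1 : |(max (s + c) 0)^p - (max (t + c) 0)^p| ≤ |s - t|^p := by
        rw [h0, zero_pow (by omega), sub_zero, abs_pow]
        apply pow_le_pow_left₀ (abs_nonneg _)
        have : max (s+c) 0 ≤ |s - t| := by
          have : t = -c := by linarith
          rw [this]
          rcases le_total (s + c) 0 with h2 | h2
          · simp [max_eq_right h2, abs_nonneg]
          · rw [max_eq_left h2]
            have : s - -c = s + c := by ring
            rw [this]; exact le_abs_self _
        calc |max (s+c) 0| = max (s+c) 0 := abs_of_nonneg (le_max_right _ _)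
          _ ≤ |s - t| := this
      calc |(max (s + c) 0)^p - (max (t + c) 0)^p| * |s - t|⁻¹
          ≤ |s - t|^p * |s - t|⁻¹ := by
            apply mul_le_mul_of_nonneg_right h1 (by positivity)
        _ = |s - t|^(p-1) := by
            have hst : |s - t| ≠ 0 := by
              simp [sub_eq_zero, hs]
            rw [show p = (p-1)+1 by omega, pow_succ]
            field_simp
            rw [Nat.add_sub_cancel]
    have hlim : Filter.Tendsto (fun s : ℝ => |s - t|^(p-1)) (nhds t) (nhds 0) := by
      have : Filter.Tendsto (fun s : ℝ => |s - t|^(p-1)) (nhds t) (nhds (|t - t|^(p-1))) := by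
        apply Filter.Tendsto.pow
        exact (continuous_abs.comp (continuous_id.sub continuous_const)).continuousAt
      simpa [zero_pow (show p - 1 ≠ 0 by omega)] using this
    apply squeeze_zero_norm' _ (hlim.mono_left nhdsWithin_le_nhds)
    filter_upwards [self_mem_nhdsWithin] with s hs
    exact hbound s hs
  · have hev : (fun s : ℝ => (max (s + c) 0)^p) =ᶠ[nhds t] (fun s => (s + c)^p) := by
      have : ∀ᶠ s in nhds t, 0 < s + c := by
        have : Continuous (fun s : ℝ => s + c) := by continuity
        exact this.continuousAt.eventually_const_lt h
      filter_upwards [this] with s hs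
      rw [max_eq_left hs.le]
    have h1 : HasDerivAt (fun s : ℝ => (s + c)^p) (p * (t+c)^(p-1) * 1) t := by
      exact (hasDerivAt_pow p (t+c)).comp t ((hasDerivAt_id t).add_const c)
    have := h1.congr_of_eventuallyEq hev
    rw [mul_one] at this
    rw [max_eq_left h.le]
    exact this

/-- Bounds for alternating sums of nonincreasing nonnegative sequences. -/
lemma alt_sum_bounds : ∀ (s : ℕ) (v : ℕ → ℝ), (∀ j, j+1 < s → v (j+1) ≤ v j) →
    (∀ j, j < s → 0 ≤ v j) →
    0 ≤ ∑ j ∈ Finset.range s, (-1:ℝ)^j * v j ∧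
    (1 ≤ s → ∑ j ∈ Finset.range s, (-1:ℝ)^j * v j ≤ v 0) := by
  intro s
  induction s with
  | zero => intro v _ _; simp
  | succ n ih =>
    intro v hmono hpos
    have hsum : ∑ j ∈ Finset.range (n+1), (-1:ℝ)^j * v j
        = v 0 - ∑ j ∈ Finset.range n, (-1:ℝ)^j * v (j+1) := by
      rw [Finset.sum_range_succ' (fun j => (-1:ℝ)^j * v j) n]
      have : ∀ j, (-1:ℝ)^(j+1) * v (j+1) = -((-1:ℝ)^j * v (j+1)) := by
        intro j; rw [pow_succ]; ring
      simp only [this]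
      rw [Finset.sum_neg_distrib]
      simp; ring
    obtain ⟨h1, h2⟩ := ih (fun j => v (j+1)) (fun j hj => hmono (j+1) (by omega))
      (fun j hj => hpos (j+1) (by omega))
    constructor
    · rw [hsum]
      rcases Nat.eq_zero_or_pos n with hn | hn
      · subst hn; simp at *; linarith [hpos]
      · have := h2 hn
        have hv10 : v 1 ≤ v 0 := hmono 0 (by omega)
        linarith
    · intro _
      rw [hsum]; linarith
/-- The `m`-th derivative of the spline. -/
noncomputable def psi (r s : ℕ) (a : ℕ → ℝ) (l : ℝ) (m : ℕ) : ℝ → ℝ :=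
  fun t => (l / (Nat.factorial (r - m) : ℝ)) *
    ∑ j ∈ Finset.range s, (-1:ℝ)^j * (max (t + a j) 0)^(r-m)

lemma psi_continuous (r s : ℕ) (a : ℕ → ℝ) (l : ℝ) (m : ℕ) : Continuous (psi r s a l m) := by
  unfold psi
  apply Continuous.mul continuous_const
  apply continuous_finset_sum
  intro j _
  apply Continuous.mul continuous_const
  apply Continuous.pow
  exact (continuous_id.add continuous_const).max continuous_const

lemma hasDerivAt_psi (r s : ℕ) (a : ℕ → ℝ) (l : ℝ) {m : ℕ} (hm : m + 2 ≤ r) (t : ℝ) :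
    HasDerivAt (psi r s a l m) (psi r s a l (m+1) t) t := by
  have hq : 2 ≤ r - m := by omega
  have hsum : HasDerivAt (fun t => ∑ j ∈ Finset.range s, (-1:ℝ)^j * (max (t + a j) 0)^(r-m))
      (∑ j ∈ Finset.range s, (-1:ℝ)^j * (((r-m : ℕ) : ℝ) * (max (t + a j) 0)^(r-m-1))) t := by
    apply HasDerivAt.fun_sum
    intro j _
    exact (hasDerivAt_reluPow hq (a j) t).const_mul _
  have h := hsum.const_mul (l / (Nat.factorial (r - m) : ℝ))
  refine h.congr_deriv ?_
  symm
  unfold psi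
  rw [Finset.mul_sum, Finset.mul_sum]
  apply Finset.sum_congr rfl
  intro j _
  have h1 : r - (m+1) = r - m - 1 := by omega
  have h2 : Nat.factorial (r-m) = (r-m) * Nat.factorial (r-m-1) := by
    conv_lhs => rw [show r - m = (r - m - 1) + 1 by omega, Nat.factorial_succ]
    congr 1
    omega
  rw [h1, h2]
  have hfac : (Nat.factorial (r-m-1) : ℝ) ≠ 0 := Nat.cast_ne_zero.2 (Nat.factorial_ne_zero _)
  have hrm : ((r - m : ℕ) : ℝ) ≠ 0 := by
    have h3 : 0 < r - m := by omega
    have : (0:ℝ) < ((r-m : ℕ) : ℝ) := by exact_mod_cast h3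
    linarith
  push_cast
  field_simp

lemma spline_eq_psi_zero (r s : ℕ) (a : ℕ → ℝ) (l : ℝ) : splineFun r s a l = psi r s a l 0 := by
  funext t; simp [splineFun, psi]

lemma iter_spline (r s : ℕ) (a : ℕ → ℝ) (l : ℝ) {m : ℕ} (hm : m ≤ r - 1) (hr : 2 ≤ r) :
    Set.EqOn (iteratedDerivWithin m (splineFun r s a l) (Set.Iic 0)) (psi r s a l m)
      (Set.Iic 0) := by
  induction m with
  | zero =>
    intro t _
    rw [iteratedDerivWithin_zero, spline_eq_psi_zero]
  | succ n ih =>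
    intro t ht
    have hn : n ≤ r - 1 := by omega
    have hud : UniqueDiffWithinAt ℝ (Set.Iic (0:ℝ)) t := uniqueDiffOn_Iic 0 t ht
    rw [iteratedDerivWithin_succ]
    rw [derivWithin_congr (ih hn) (ih hn ht)]
    exact ((hasDerivAt_psi r s a l (by omega) t).hasDerivWithinAt).derivWithin hud
section PsiProps

variable {r s : ℕ} {a : ℕ → ℝ} {l : ℝ}

lemma a_le_of_le (ha : ∀ i j, i < j → j < s → a j < a i) {i j : ℕ} (hij : i ≤ j) (hj : j < s) :
    a j ≤ a i := by
  rcases eq_or_lt_of_le hij with h | h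
  · subst h; exact le_rfl
  · exact (ha i j h hj).le

lemma psi_nonneg (ha : ∀ i j, i < j → j < s → a j < a i) (hl : 0 < l) {m : ℕ} (t : ℝ) :
    0 ≤ psi r s a l m t := by
  unfold psi
  apply mul_nonneg (by positivity)
  exact (alt_sum_bounds s (fun j => (max (t + a j) 0)^(r-m))
    (fun j hj => pow_le_pow_left₀ (le_max_right _ _)
      (max_le_max (by linarith [ha j (j+1) (by omega) hj]) le_rfl) _)
    (fun j _ => pow_nonneg (le_max_right _ _) _)).1

lemma psi_mono (ha : ∀ i j, i < j → j < s → a j < a i) (hl : 0 < l) {m : ℕ}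
    {t1 t2 : ℝ} (h12 : t1 ≤ t2) : psi r s a l m t1 ≤ psi r s a l m t2 := by
  unfold psi
  apply mul_le_mul_of_nonneg_left _ (by positivity)
  rw [← sub_nonneg, ← Finset.sum_sub_distrib]
  have hrw : ∀ j, (-1:ℝ)^j * (max (t2 + a j) 0)^(r-m) - (-1:ℝ)^j * (max (t1 + a j) 0)^(r-m)
      = (-1:ℝ)^j * ((max (t1 + a j + (t2 - t1)) 0)^(r-m) - (max (t1 + a j) 0)^(r-m)) := by
    intro j; rw [show t1 + a j + (t2 - t1) = t2 + a j by ring]; ring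
  simp only [hrw]
  rcases Nat.eq_zero_or_pos (r - m) with hq | hq
  · simp [hq]
  · exact (alt_sum_bounds s
      (fun j => (max (t1 + a j + (t2-t1)) 0)^(r-m) - (max (t1 + a j) 0)^(r-m))
      (fun j hj => reluPow_incr_mono hq
        (by linarith [ha j (j+1) (by omega) hj]) (by linarith))
      (fun j _ => by
        rw [sub_nonneg]
        exact pow_le_pow_left₀ (le_max_right _ _) (max_le_max (by linarith) le_rfl) _)).1

lemma psi_top_lip (ha : ∀ i j, i < j → j < s → a j < a i) (hl : 0 < l) (hr : 2 ≤ r)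
    {t1 t2 : ℝ} (h12 : t1 ≤ t2) :
    psi r s a l (r-1) t2 - psi r s a l (r-1) t1 ≤ l * (t2 - t1) := by
  have hq : r - (r-1) = 1 := by omega
  unfold psi
  rw [hq]
  rcases Nat.eq_zero_or_pos s with hs | hs
  · subst hs; simp; nlinarith
  have hrw : ∀ j : ℕ, (-1:ℝ)^j * (max (t2 + a j) 0)^1 - (-1:ℝ)^j * (max (t1 + a j) 0)^1
      = (-1:ℝ)^j * (max (t1 + a j + (t2 - t1)) 0 - max (t1 + a j) 0) := by
    intro j; rw [show t1 + a j + (t2 - t1) = t2 + a j by ring]; ring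
  rw [← mul_sub, ← Finset.sum_sub_distrib]
  simp only [hrw]
  have hub := (alt_sum_bounds s (fun j => max (t1 + a j + (t2-t1)) 0 - max (t1 + a j) 0)
      (fun j hj => relu_incr_mono1 (by linarith [ha j (j+1) (by omega) hj]) (by linarith))
      (fun j _ => relu_incr_nonneg (by linarith))).2 hs
  have h0 : max (t1 + a 0 + (t2-t1)) 0 - max (t1 + a 0) 0 ≤ t2 - t1 :=
    relu_incr_le (by linarith)
  have hfac : (Nat.factorial 1 : ℝ) = 1 := by norm_num [Nat.factorial]
  rw [hfac, div_one]
  calc l * ∑ j ∈ Finset.range s, (-1:ℝ)^j * (max (t1 + a j + (t2-t1)) 0 - max (t1 + a j) 0)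
      ≤ l * (max (t1 + a 0 + (t2-t1)) 0 - max (t1 + a 0) 0) := by
        apply mul_le_mul_of_nonneg_left _ hl.le
        exact hub
    _ ≤ l * (t2 - t1) := mul_le_mul_of_nonneg_left h0 hl.le

lemma psi_eq_zero_left (ha : ∀ i j, i < j → j < s → a j < a i) {m : ℕ} (hm : m ≤ r - 1)
    (hr : 2 ≤ r) {t : ℝ} (ht : t ≤ -a 0) : psi r s a l m t = 0 := by
  unfold psi
  have : ∀ j ∈ Finset.range s, (-1:ℝ)^j * (max (t + a j) 0)^(r-m) = 0 := by
    intro j hj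
    rw [Finset.mem_range] at hj
    have haj : a j ≤ a 0 := a_le_of_le ha (Nat.zero_le j) hj
    have : max (t + a j) 0 = 0 := max_eq_right (by linarith)
    rw [this, zero_pow (by omega), mul_zero]
  rw [Finset.sum_congr rfl this]
  simp

/-- On the `p`-th piece the top-level spline derivative is affine with slope `l` (p odd)
or `0` (p even). -/
lemma psi_piece_slope (ha : ∀ i j, i < j → j < s → a j < a i) (hr : 2 ≤ r)
    {p : ℕ} (hp : 1 ≤ p) (hps : p ≤ s) {t1 t2 : ℝ}
    (h1 : -a (p-1) ≤ t1) (h12 : t1 ≤ t2)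
    (h2 : p < s → t2 ≤ -a p) (ht2 : t2 ≤ 0) :
    psi r s a l (r-1) t2 - psi r s a l (r-1) t1
      = (if Odd p then l * (t2 - t1) else 0) := by
  have hq : r - (r-1) = 1 := by omega
  have key : ∀ t : ℝ, -a (p-1) ≤ t → t ≤ t2 →
      ∑ j ∈ Finset.range s, (-1:ℝ)^j * (max (t + a j) 0)^(r-(r-1))
        = (∑ j ∈ Finset.range p, (-1:ℝ)^j * (t + a j)) := by
    intro t hta htb
    rw [hq]
    rw [← Finset.sum_range_add_sum_Ico _ hps]
    have e1 : ∀ j ∈ Finset.range p, (-1:ℝ)^j * (max (t + a j) 0)^1 = (-1:ℝ)^j * (t + a j) := by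
      intro j hj
      rw [Finset.mem_range] at hj
      have : a (p-1) ≤ a j := a_le_of_le ha (by omega) (by omega)
      rw [pow_one, max_eq_left (by linarith)]
    have e2 : ∀ j ∈ Finset.Ico p s, (-1:ℝ)^j * (max (t + a j) 0)^1 = 0 := by
      intro j hj
      rw [Finset.mem_Ico] at hj
      have hps' : p < s := lt_of_le_of_lt hj.1 hj.2
      have haj : a j ≤ a p := a_le_of_le ha hj.1 hj.2
      have : t ≤ -a p := le_trans htb (h2 hps')
      rw [pow_one, max_eq_right (by linarith), mul_zero]
    rw [Finset.sum_congr rfl e1, Finset.sum_congr rfl e2]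
    simp
  unfold psi
  rw [key t2 (le_trans h1 h12) le_rfl, key t1 h1 h12]
  rw [← mul_sub, ← Finset.sum_sub_distrib]
  have : ∀ j : ℕ, (-1:ℝ)^j * (t2 + a j) - (-1:ℝ)^j * (t1 + a j) = (t2 - t1) * (-1:ℝ)^j := by
    intro j; ring
  simp only [this]
  rw [← Finset.mul_sum, neg_one_geom_sum]
  have hfac : (Nat.factorial (r - (r-1)) : ℝ) = 1 := by rw [hq]; norm_num [Nat.factorial]
  rw [hfac, div_one]
  rcases Nat.even_or_odd p with he | ho
  · rw [if_pos he, if_neg (Nat.not_odd_iff_even.2 he)]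
    ring
  · rw [if_neg (Nat.not_even_iff_odd.2 ho), if_pos ho]
    ring

end PsiProps
/-- An alternating sequence for `f` of length `n` inside `(-∞,0]`:
points `t 0 < … < t (n-1) ≤ 0`, `f < 0` at even indices and `f > 0` at odd indices. -/
lemma even_pred_iff {i : ℕ} (h : 1 ≤ i) : Even (i-1) ↔ ¬ Even i := by
  rw [Nat.even_sub h]
  simp [Nat.even_iff]

def AltOn (f : ℝ → ℝ) (n : ℕ) : Prop :=
  ∃ t : ℕ → ℝ, (∀ i, i + 1 < n → t i < t (i+1)) ∧ (∀ i, i < n → t i ≤ 0) ∧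
    (∀ i, i < n → if Even i then f (t i) < 0 else 0 < f (t i))

lemma mvt_step {f g : ℝ → ℝ} (hc : ContinuousOn f (Set.Iic 0))
    (hd : ∀ t < (0:ℝ), HasDerivAt f (g t) t) {u v : ℝ} (huv : u < v) (hv : v ≤ 0) :
    ∃ c, u < c ∧ c < v ∧ g c = (f v - f u) / (v - u) := by
  obtain ⟨c, hc1, hc2⟩ := exists_hasDerivAt_eq_slope f g huv
    (hc.mono (fun x hx => le_trans hx.2 hv))
    (fun x hx => hd x (lt_of_lt_of_le hx.2 hv))
  exact ⟨c, hc1.1, hc1.2, hc2⟩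

lemma alt_left_point {f g : ℝ → ℝ} (hc : ContinuousOn f (Set.Iic 0))
    (hd : ∀ t < (0:ℝ), HasDerivAt f (g t) t) {δ : ℝ}
    (hlim : Filter.Tendsto f Filter.atBot (nhds δ)) (hδ : 0 ≤ δ)
    {t0 : ℝ} (ht0 : t0 ≤ 0) (hneg : f t0 < 0) :
    ∃ c, c < t0 ∧ g c < 0 := by
  have hev1 : ∀ᶠ s in Filter.atBot, f t0 < f s :=
    hlim.eventually (eventually_gt_nhds (lt_of_lt_of_le hneg hδ))
  have hev2 : ∀ᶠ s : ℝ in Filter.atBot, s < t0 := Filter.eventually_lt_atBot t0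
  obtain ⟨w, hw1, hw2⟩ := (hev1.and hev2).exists
  obtain ⟨c, hc1, hc2, hc3⟩ := mvt_step hc hd hw2 ht0
  refine ⟨c, hc2, ?_⟩
  rw [hc3]
  apply div_neg_of_neg_of_pos <;> linarith

lemma alt_up {f g : ℝ → ℝ} (hc : ContinuousOn f (Set.Iic 0))
    (hd : ∀ t < (0:ℝ), HasDerivAt f (g t) t) {δ : ℝ}
    (hlim : Filter.Tendsto f Filter.atBot (nhds δ)) (hδ : 0 ≤ δ)
    {n : ℕ} (hn : 1 ≤ n) (h : AltOn f n) : AltOn g n := by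
  obtain ⟨t, ht1, ht2, ht3⟩ := h
  have hsign0 : f (t 0) < 0 := by have := ht3 0 (by omega); simpa using this
  obtain ⟨c0, hc01, hc02⟩ := alt_left_point hc hd hlim hδ (ht2 0 (by omega)) hsign0
  have H : ∀ i : ℕ, ∃ c : ℝ, (i = 0 → c = c0) ∧
      (1 ≤ i → i < n → (t (i-1) < c ∧ c < t i ∧ (if Even i then g c < 0 else 0 < g c))) := by
    intro i
    rcases Nat.eq_zero_or_pos i with h0 | h0
    · exact ⟨c0, fun _ => rfl, fun h1 => by omega⟩
    rcases lt_or_ge i n with hin | hin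
    · have hstep : t (i-1) < t i := by
        have := ht1 (i-1) (by omega)
        rwa [show i - 1 + 1 = i by omega] at this
      obtain ⟨c, hca, hcb, hcc⟩ := mvt_step hc hd hstep (ht2 i hin)
      refine ⟨c, fun h => by omega, fun _ _ => ⟨hca, hcb, ?_⟩⟩
      have hfi := ht3 i hin
      have hfi1 := ht3 (i-1) (by omega)
      rcases Nat.even_or_odd i with he | ho
      · rw [if_pos he] at hfi ⊢
        have : ¬ Even (i-1) := by
          rw [even_pred_iff h0]; simpa using he
        rw [if_neg this] at hfi1
        rw [hcc]; apply div_neg_of_neg_of_pos <;> linarith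
      · rw [if_neg (Nat.not_even_iff_odd.2 ho)] at hfi ⊢
        have : Even (i-1) := by
          rw [even_pred_iff h0]; exact Nat.not_even_iff_odd.2 ho
        rw [if_pos this] at hfi1
        rw [hcc]; apply div_pos <;> linarith
    · exact ⟨0, fun h => by omega, fun _ h2 => by omega⟩
  choose u hu0 hu1 using H
  have hu00 : u 0 = c0 := hu0 0 rfl
  refine ⟨u, ?_, ?_, ?_⟩
  · intro i hi
    have hnext := hu1 (i+1) (by omega) hi
    rcases Nat.eq_zero_or_pos i with h0 | h0
    · subst h0
      have : u 1 > t 0 := by simpa using hnext.1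
      rw [hu00]; linarith
    · have hcur := hu1 i h0 (by omega)
      have h1 : u i < t i := hcur.2.1
      have h2 : t i < u (i+1) := by
        have := hnext.1
        rwa [show i + 1 - 1 = i by omega] at this
      linarith
  · intro i hi
    rcases Nat.eq_zero_or_pos i with h0 | h0
    · subst h0; rw [hu00]; linarith [ht2 0 (by omega)]
    · have hcur := hu1 i h0 hi
      linarith [hcur.2.1, ht2 i hi]
  · intro i hi
    rcases Nat.eq_zero_or_pos i with h0 | h0
    · subst h0; rw [hu00]; simpa using hc02
    · exact (hu1 i h0 hi).2.2

lemma alt_up_bonus {f g : ℝ → ℝ} (hc : ContinuousOn f (Set.Iic 0))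
    (hd : ∀ t < (0:ℝ), HasDerivAt f (g t) t) {δ : ℝ}
    (hlim : Filter.Tendsto f Filter.atBot (nhds δ)) (hδ : 0 ≤ δ) (hf0 : f 0 = 0)
    {n : ℕ} (hn : 1 ≤ n) (h : AltOn f n) : AltOn g (n+1) := by
  obtain ⟨t, ht1, ht2, ht3⟩ := h
  -- last point is < 0 since f there is nonzero
  have htlast : t (n-1) < 0 := by
    have hs := ht3 (n-1) (by omega)
    have hne : f (t (n-1)) ≠ 0 := by
      rcases Nat.even_or_odd (n-1) with he | ho
      · rw [if_pos he] at hs; linarith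
      · rw [if_neg (Nat.not_even_iff_odd.2 ho)] at hs; linarith
    rcases lt_or_eq_of_le (ht2 (n-1) (by omega)) with h | h
    · exact h
    · exact absurd (h ▸ hf0) hne
  -- extend by the extra MVT point in (t (n-1), 0)
  obtain ⟨cl, hcl1, hcl2, hcl3⟩ := mvt_step hc hd htlast le_rfl
  -- new sequence for f of length n+1 conceptually; we directly build alternation for g
  have hsign0 : f (t 0) < 0 := by have := ht3 0 (by omega); simpa using this
  obtain ⟨c0, hc01, hc02⟩ := alt_left_point hc hd hlim hδ (ht2 0 (by omega)) hsign0
  have H : ∀ i : ℕ, ∃ c : ℝ, (i = 0 → c = c0) ∧ (i = n → c = cl) ∧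
      (1 ≤ i → i < n → (t (i-1) < c ∧ c < t i ∧ (if Even i then g c < 0 else 0 < g c))) := by
    intro i
    rcases Nat.eq_zero_or_pos i with h0 | h0
    · exact ⟨c0, fun _ => rfl, fun hh => by omega, fun h1 => by omega⟩
    rcases lt_or_ge i n with hin | hin
    · have hstep : t (i-1) < t i := by
        have := ht1 (i-1) (by omega)
        rwa [show i - 1 + 1 = i by omega] at this
      obtain ⟨c, hca, hcb, hcc⟩ := mvt_step hc hd hstep (ht2 i hin)
      refine ⟨c, fun h => by omega, fun h => by omega, fun _ _ => ⟨hca, hcb, ?_⟩⟩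
      have hfi := ht3 i hin
      have hfi1 := ht3 (i-1) (by omega)
      rcases Nat.even_or_odd i with he | ho
      · rw [if_pos he] at hfi ⊢
        have : ¬ Even (i-1) := by
          rw [even_pred_iff h0]; simpa using he
        rw [if_neg this] at hfi1
        rw [hcc]; apply div_neg_of_neg_of_pos <;> linarith
      · rw [if_neg (Nat.not_even_iff_odd.2 ho)] at hfi ⊢
        have : Even (i-1) := by
          rw [even_pred_iff h0]; exact Nat.not_even_iff_odd.2 ho
        rw [if_pos this] at hfi1
        rw [hcc]; apply div_pos <;> linarith
    · exact ⟨cl, fun h => by omega, fun _ => rfl, fun _ h2 => by omega⟩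
  choose u hu0 hun hu1 using H
  have hu00 : u 0 = c0 := hu0 0 rfl
  have hunn : u n = cl := hun n rfl
  have hclsign : if Even n then g cl < 0 else 0 < g cl := by
    have hs := ht3 (n-1) (by omega)
    rcases Nat.even_or_odd n with he | ho
    · rw [if_pos he]
      have : ¬ Even (n-1) := by
        rw [even_pred_iff hn]; simpa using he
      rw [if_neg this] at hs
      rw [hcl3, hf0]
      apply div_neg_of_neg_of_pos <;> linarith
    · rw [if_neg (Nat.not_even_iff_odd.2 ho)]
      have : Even (n-1) := by
        rw [even_pred_iff hn]; exact Nat.not_even_iff_odd.2 ho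
      rw [if_pos this] at hs
      rw [hcl3, hf0]
      apply div_pos <;> linarith
  refine ⟨u, ?_, ?_, ?_⟩
  · intro i hi
    rcases Nat.eq_zero_or_pos i with h0 | h0
    · subst h0
      rcases Nat.eq_or_lt_of_le hn with h1 | h1
      · -- n = 1 : u 0 = c0 < t 0 < cl = u 1
        have hu1n : u (0+1) = cl := by rw [show 0+1 = n by omega]; exact hunn
        rw [hu00, hu1n]
        have ht00 : t (n-1) = t 0 := by rw [show n-1 = 0 by omega]
        have := hcl1
        rw [ht00] at this
        linarith
      · have : u 1 > t 0 := by simpa using (hu1 1 le_rfl (by omega)).1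
        rw [hu00]; linarith
    · rcases lt_or_ge (i+1) n with hin | hin
      · have hcur := hu1 i h0 (by omega)
        have hnext := hu1 (i+1) (by omega) hin
        have h2 : t i < u (i+1) := by
          have := hnext.1
          rwa [show i + 1 - 1 = i by omega] at this
        linarith [hcur.2.1]
      · have hi1 : i = n - 1 := by omega
        have hcur := hu1 i h0 (by omega)
        have hun1 : u (i+1) = cl := by rw [show i+1 = n by omega]; exact hunn
        rw [hun1]
        have hti : t i = t (n-1) := by rw [hi1]
        have h3 := hcur.2.1
        rw [hti] at h3
        linarith
  · intro i hi
    rcases Nat.eq_zero_or_pos i with h0 | h0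
    · subst h0; rw [hu00]; linarith [ht2 0 (by omega)]
    · rcases lt_or_ge i n with hin | hin
      · linarith [(hu1 i h0 hin).2.1, ht2 i hin]
      · have : i = n := by omega
        rw [this, hunn]; linarith [hcl2]
  · intro i hi
    rcases Nat.eq_zero_or_pos i with h0 | h0
    · subst h0; rw [hu00]; simpa using hc02
    · rcases lt_or_ge i n with hin | hin
      · exact (hu1 i h0 hin).2.2
      · have : i = n := by omega
        rw [this, hunn]; exact hclsign
section Rank

/-- index of the piece of `(-a 0, 0]` (split by the knots) containing `t`. -/
noncomputable def pieceIdx (s : ℕ) (a : ℕ → ℝ) (t : ℝ) : ℕ :=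
  ((Finset.range s).filter (fun j => -a j < t)).sup (fun j => j) + 1

variable {s : ℕ} {a : ℕ → ℝ}

lemma pieceIdx_facts (ha : ∀ i j, i < j → j < s → a j < a i) (hs : 1 ≤ s)
    {t : ℝ} (ht : -a 0 < t) (_ht0 : t ≤ 0) :
    1 ≤ pieceIdx s a t ∧ pieceIdx s a t ≤ s ∧ -a (pieceIdx s a t - 1) < t ∧
      (pieceIdx s a t < s → t ≤ -a (pieceIdx s a t)) := by
  set Fl := ((Finset.range s).filter (fun j => -a j < t)) with hFl
  have h0 : 0 ∈ Fl := by
    rw [hFl, Finset.mem_filter]; exact ⟨Finset.mem_range.2 (by omega), ht⟩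
  have hne : Fl.Nonempty := ⟨0, h0⟩
  obtain ⟨b, hb, hbe⟩ := Finset.exists_mem_eq_sup Fl hne (fun j => j)
  have hbmem := hb
  rw [hFl, Finset.mem_filter, Finset.mem_range] at hbmem
  have hsup : pieceIdx s a t = Fl.sup (fun j => j) + 1 := rfl
  refine ⟨by omega, ?_, ?_, ?_⟩
  · rw [hsup, hbe]; simpa using hbmem.1
  · rw [hsup, hbe]
    simpa using hbmem.2
  · intro hlt
    by_contra hcon
    push_neg at hcon
    have : pieceIdx s a t ∈ Fl := by
      rw [hFl, Finset.mem_filter, Finset.mem_range]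
      exact ⟨by omega, hcon⟩
    have := Finset.le_sup (f := fun j : ℕ => j) this
    omega
lemma pieceIdx_mono (ha : ∀ i j, i < j → j < s → a j < a i) {t t' : ℝ} (h : t ≤ t') :
    pieceIdx s a t ≤ pieceIdx s a t' := by
  unfold pieceIdx
  have : ((Finset.range s).filter (fun j => -a j < t)) ⊆
      ((Finset.range s).filter (fun j => -a j < t')) := by
    intro j hj
    rw [Finset.mem_filter] at hj ⊢
    exact ⟨hj.1, lt_of_lt_of_le hj.2 h⟩
  exact Nat.succ_le_succ (Finset.sup_mono this)

/-- rank of a signed point. `σ = true` means the sign is `+`. -/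
noncomputable def rnk (s : ℕ) (a : ℕ → ℝ) (t : ℝ) (σ : Bool) : ℕ :=
  if (σ = true ↔ Odd (pieceIdx s a t)) then 2 * pieceIdx s a t - 1 else 2 * pieceIdx s a t

lemma rnk_le (ha : ∀ i j, i < j → j < s → a j < a i) (hs : 1 ≤ s)
    {t : ℝ} (ht : -a 0 < t) (ht0 : t ≤ 0) (σ : Bool) : rnk s a t σ ≤ 2 * s := by
  obtain ⟨h1, h2, _, _⟩ := pieceIdx_facts ha hs ht ht0
  unfold rnk; split_ifs <;> omega

lemma rnk_of_iff {t : ℝ} {σ : Bool} (h : σ = true ↔ Odd (pieceIdx s a t)) :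
    rnk s a t σ = 2 * pieceIdx s a t - 1 := by unfold rnk; rw [if_pos h]

lemma rnk_of_not_iff {t : ℝ} {σ : Bool} (h : ¬ (σ = true ↔ Odd (pieceIdx s a t))) :
    rnk s a t σ = 2 * pieceIdx s a t := by unfold rnk; rw [if_neg h]

section WithDelta

variable {Δ : ℝ → ℝ}

/-- The crucial rank-step estimates along an alternation of `Δ`. -/
lemma rank_step (ha : ∀ i j, i < j → j < s → a j < a i) (hs : 1 ≤ s)
    (hpiece : ∀ p, 1 ≤ p → p ≤ s → ∀ t1 t2, -a (p-1) ≤ t1 → t1 ≤ t2 →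
      (p < s → t2 ≤ -a p) → t2 ≤ 0 →
      (if Odd p then Δ t2 ≤ Δ t1 else Δ t1 ≤ Δ t2))
    {u v : ℝ} (hu : -a 0 < u) (hu0 : u ≤ 0) (hv : -a 0 < v) (hv0 : v ≤ 0)
    (huv : u < v) (σ : Bool)
    (hΔu : if σ then 0 < Δ u else Δ u < 0)
    (hΔv : if σ then Δ v < 0 else 0 < Δ v) :
    (rnk s a u σ + 1 ≤ rnk s a v (!σ)) ∧
    (Even (rnk s a u σ) → rnk s a u σ + 2 ≤ rnk s a v (!σ)) ∧
    (Even (rnk s a u σ) → ¬ Even (rnk s a v (!σ)) → rnk s a u σ + 3 ≤ rnk s a v (!σ)) ∧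
    (¬ Even (rnk s a u σ) → ¬ Even (rnk s a v (!σ)) → rnk s a u σ + 2 ≤ rnk s a v (!σ)) := by
  obtain ⟨hp1, hp2, hp3, hp4⟩ := pieceIdx_facts ha hs hu hu0
  obtain ⟨hq1, hq2, hq3, hq4⟩ := pieceIdx_facts ha hs hv hv0
  have hpq : pieceIdx s a u ≤ pieceIdx s a v := pieceIdx_mono ha huv.le
  -- F2 : if the sign at `u` is not the entry sign of its piece, `v` is in a later piece
  have F2 : ¬ (σ = true ↔ Odd (pieceIdx s a u)) → pieceIdx s a u ≠ pieceIdx s a v := by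
    intro hcu hne
    have hmono := hpiece (pieceIdx s a u) hp1 hp2 u v hp3.le huv.le
      (fun hps => by rw [hne]; exact hq4 (hne ▸ hps)) hv0
    rcases Nat.even_or_odd (pieceIdx s a u) with he | ho
    · -- even piece, Δ nondecreasing; ¬iff forces σ = true
      rw [if_neg (Nat.not_odd_iff_even.2 he)] at hmono
      have hσ : σ = true := by
        cases σ with
        | true => rfl
        | false => exact absurd (by simp [Nat.not_odd_iff_even.2 he]) hcu
      subst hσ
      simp at hΔu hΔv
      linarith
    · rw [if_pos ho] at hmono
      have hσ : σ = false := by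
        cases σ with
        | true => exact absurd (by simp [ho]) hcu
        | false => rfl
      subst hσ
      simp at hΔu hΔv
      linarith
  -- F1 : if both signs are entry signs, the pieces differ
  have F1 : (σ = true ↔ Odd (pieceIdx s a u)) → ((!σ) = true ↔ Odd (pieceIdx s a v)) →
      pieceIdx s a u ≠ pieceIdx s a v := by
    intro hcu hcv hne
    rw [← hne] at hcv
    cases σ with
    | true =>
      simp at hcu hcv
      rw [Nat.odd_iff] at hcu; rw [Nat.even_iff] at hcv; omega
    | false =>
      simp at hcu hcv
      rw [Nat.even_iff] at hcu; rw [Nat.odd_iff] at hcv; omega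
  -- F3 : entry-sign at `v` but exit-sign at `u` forbids adjacent pieces
  have F3 : ¬ (σ = true ↔ Odd (pieceIdx s a u)) → ((!σ) = true ↔ Odd (pieceIdx s a v)) →
      pieceIdx s a v ≠ pieceIdx s a u + 1 := by
    intro hcu hcv hne
    rw [hne] at hcv
    cases σ with
    | true =>
      simp at hcu hcv
      rw [Nat.even_iff] at hcu; rw [Nat.even_iff] at hcv; omega
    | false =>
      simp at hcu hcv
      rw [Nat.odd_iff] at hcu; rw [Nat.odd_iff] at hcv; omega
  by_cases hcu : (σ = true ↔ Odd (pieceIdx s a u)) <;>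
    by_cases hcv : ((!σ) = true ↔ Odd (pieceIdx s a v))
  · -- both entry signs : pieces differ
    rw [rnk_of_iff hcu, rnk_of_iff hcv]
    have := F1 hcu hcv
    refine ⟨by omega, ?_, ?_, ?_⟩
    · intro h; rw [Nat.even_iff] at h; omega
    · intro h _; rw [Nat.even_iff] at h; omega
    · intro _ _; omega
  · rw [rnk_of_iff hcu, rnk_of_not_iff hcv]
    refine ⟨by omega, ?_, ?_, ?_⟩
    · intro h; rw [Nat.even_iff] at h; omega
    · intro h _; rw [Nat.even_iff] at h; omega
    · intro _ h; exfalso; apply h; rw [Nat.even_iff]; omega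
  · rw [rnk_of_not_iff hcu, rnk_of_iff hcv]
    have h1 := F2 hcu
    have h2 := F3 hcu hcv
    refine ⟨by omega, fun _ => by omega, fun _ _ => by omega, ?_⟩
    · intro h; exfalso; apply h; rw [Nat.even_iff]; omega
  · rw [rnk_of_not_iff hcu, rnk_of_not_iff hcv]
    have h1 := F2 hcu
    refine ⟨by omega, fun _ => by omega, ?_, ?_⟩
    · intro _ h; exfalso; apply h; rw [Nat.even_iff]; omega
    · intro h; exfalso; apply h; rw [Nat.even_iff]; omega

end WithDelta
end Rank
section AltBound

variable {s : ℕ} {a : ℕ → ℝ} {Δ : ℝ → ℝ}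

lemma alt_chain {t : ℕ → ℝ} {n : ℕ} (h : ∀ i, i+1 < n → t i < t (i+1)) :
    ∀ i j, i ≤ j → j < n → t i ≤ t j := by
  have key : ∀ d i, i + d < n → t i ≤ t (i + d) := by
    intro d
    induction d with
    | zero => intro i _; simp
    | succ dd ih =>
      intro i hi
      have h1 := ih i (by omega)
      have h2 := h (i+dd) (by omega)
      have : i + (dd+1) = (i+dd)+1 := by omega
      rw [this]
      linarith
  intro i j hij hj
  have := key (j - i) i (by omega)
  rwa [show i + (j-i) = j by omega] at this

private def sgn (i : ℕ) : Bool := !(decide (Even i))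

lemma sgn_succ (i : ℕ) : sgn (i+1) = !(sgn i) := by
  unfold sgn
  rcases Nat.even_or_odd i with he | ho
  · simp [he, Nat.even_add_one]
  · simp [Nat.even_add_one, Nat.not_even_iff_odd.2 ho]

/-- The fundamental bound: an alternation of `Δ` has length at most `s`
(`s-1` if moreover `Δ 0 = 0`). -/
lemma alt_bound (ha : ∀ i j, i < j → j < s → a j < a i) (hs : 1 ≤ s)
    (hpiece : ∀ p, 1 ≤ p → p ≤ s → ∀ t1 t2, -a (p-1) ≤ t1 → t1 ≤ t2 →
      (p < s → t2 ≤ -a p) → t2 ≤ 0 →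
      (if Odd p then Δ t2 ≤ Δ t1 else Δ t1 ≤ Δ t2))
    (hzl : ∀ t, t ≤ -a 0 → 0 ≤ Δ t)
    {n : ℕ} (h : AltOn Δ n) : n ≤ s ∧ (Δ 0 = 0 → n ≤ s - 1) := by
  rcases Nat.eq_zero_or_pos n with hn0 | hn0
  · subst hn0; exact ⟨by omega, fun _ => by omega⟩
  obtain ⟨t, ht1, ht2, ht3⟩ := h
  have hIoc : ∀ i, i < n → -a 0 < t i ∧ t i ≤ 0 := by
    intro i hi
    have h00 : Δ (t 0) < 0 := by have := ht3 0 (by omega); simpa using this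
    have ht0a : -a 0 < t 0 := by
      by_contra hcon
      push_neg at hcon
      linarith [hzl (t 0) hcon]
    exact ⟨lt_of_lt_of_le ht0a (alt_chain ht1 0 i (by omega) hi), ht2 i hi⟩
  have hsgncond : ∀ i, i < n →
      (if sgn i then 0 < Δ (t i) else Δ (t i) < 0) := by
    intro i hi
    have := ht3 i hi
    rcases Nat.even_or_odd i with he | ho
    · rw [if_pos he] at this
      simpa [sgn, he] using this
    · rw [if_neg (Nat.not_even_iff_odd.2 ho)] at this
      simpa [sgn, Nat.not_even_iff_odd.2 ho] using this
  have inv : ∀ i, i < n →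
      (Even (rnk s a (t i) (sgn i)) → 2*i+2 ≤ rnk s a (t i) (sgn i)) ∧
      (¬ Even (rnk s a (t i) (sgn i)) → 2*i+3 ≤ rnk s a (t i) (sgn i)) := by
    intro i
    induction i with
    | zero =>
      intro hi
      obtain ⟨hio1, hio2⟩ := hIoc 0 hi
      obtain ⟨hp1, hp2, _, _⟩ := pieceIdx_facts ha hs hio1 hio2
      have hsgn0 : sgn 0 = false := by simp [sgn]
      rw [hsgn0]
      by_cases hc : ((false : Bool) = true ↔ Odd (pieceIdx s a (t 0)))
      · rw [rnk_of_iff hc]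
        have hodd : ¬ Odd (pieceIdx s a (t 0)) := by
          intro hco; exact absurd (hc.2 hco) (by simp)
        rw [Nat.odd_iff] at hodd
        constructor
        · intro hEv; rw [Nat.even_iff] at hEv; omega
        · intro _; omega
      · rw [rnk_of_not_iff hc]
        constructor
        · intro _; omega
        · intro hEv; exfalso; apply hEv; rw [Nat.even_iff]; omega
    | succ i ih =>
      intro hi
      have hihi := ih (by omega)
      obtain ⟨hiou1, hiou2⟩ := hIoc i (by omega)
      obtain ⟨hiov1, hiov2⟩ := hIoc (i+1) hi
      have hΔv : (if sgn i then Δ (t (i+1)) < 0 else 0 < Δ (t (i+1))) := by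
        have := hsgncond (i+1) hi
        rw [sgn_succ] at this
        cases hsi : sgn i <;> simp [hsi] at this ⊢ <;> exact this
      obtain ⟨hstep1, hstep2, hstep3, hstep4⟩ := rank_step ha hs hpiece hiou1 hiou2
        hiov1 hiov2 (ht1 i hi) (sgn i) (hsgncond i (by omega)) hΔv
      rw [← sgn_succ] at hstep1 hstep2 hstep3 hstep4
      rcases Nat.even_or_odd (rnk s a (t i) (sgn i)) with heu | hou
      · have h1 := hihi.1 heu
        constructor
        · intro _; have := hstep2 heu; omega
        · intro hodd2; have := hstep3 heu hodd2; omega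
      · have h1 := hihi.2 (Nat.not_even_iff_odd.2 hou)
        constructor
        · intro _; have := hstep1; omega
        · intro hodd; have := hstep4 (Nat.not_even_iff_odd.2 hou) hodd; omega
  -- final bounds
  obtain ⟨hio1, hio2⟩ := hIoc (n-1) (by omega)
  have hle := rnk_le ha hs hio1 hio2 (sgn (n-1))
  have hinv := inv (n-1) (by omega)
  constructor
  · rcases Nat.even_or_odd (rnk s a (t (n-1)) (sgn (n-1))) with he | ho
    · have := hinv.1 he; omega
    · have := hinv.2 (Nat.not_even_iff_odd.2 ho); omega
  · intro hΔ0
    -- the last rank cannot be 2s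
    have hlast : rnk s a (t (n-1)) (sgn (n-1)) ≠ 2*s := by
      intro hcon
      obtain ⟨hp1, hp2, hp3, _⟩ := pieceIdx_facts ha hs hio1 hio2
      by_cases hc : ((sgn (n-1)) = true ↔ Odd (pieceIdx s a (t (n-1))))
      · rw [rnk_of_iff hc] at hcon; omega
      · rw [rnk_of_not_iff hc] at hcon
        have hps : pieceIdx s a (t (n-1)) = s := by omega
        have hmono := hpiece s hs le_rfl (t (n-1)) 0
          (by rw [← hps]; exact hp3.le) hio2 (fun hss => absurd hss (lt_irrefl s)) le_rfl
        have hsgnl := hsgncond (n-1) (by omega)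
        rcases Nat.even_or_odd s with he | ho
        · rw [if_neg (Nat.not_odd_iff_even.2 he)] at hmono
          have hσ : sgn (n-1) = true := by
            cases hx : sgn (n-1) with
            | true => rfl
            | false =>
              exfalso; apply hc
              rw [hx, hps]
              simp [Nat.not_odd_iff_even.2 he]
          rw [hσ] at hsgnl
          simp at hsgnl
          rw [hΔ0] at hmono
          linarith
        · rw [if_pos ho] at hmono
          have hσ : sgn (n-1) = false := by
            cases hx : sgn (n-1) with
            | false => rfl
            | true =>
              exfalso; apply hc
              rw [hx, hps]
              simp [ho]
          rw [hσ] at hsgnl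
          simp at hsgnl
          rw [hΔ0] at hmono
          linarith
    rcases Nat.even_or_odd (rnk s a (t (n-1)) (sgn (n-1))) with he | ho
    · have := hinv.1 he; omega
    · have := hinv.2 (Nat.not_even_iff_odd.2 ho); omega

end AltBound
section Xside

lemma x_hasDeriv {r : ℕ} {x : ℝ → ℝ} (h1 : ContDiffOn ℝ (r - 1 : ℕ) x (Set.Iic 0))
    {m : ℕ} (hm : m + 1 ≤ r - 1) :
    ∀ t < (0:ℝ), HasDerivAt (iteratedDerivWithin m x (Set.Iic 0))
      (iteratedDerivWithin (m+1) x (Set.Iic 0) t) t := by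
  intro t ht
  have hdOn : DifferentiableOn ℝ (iteratedDerivWithin m x (Set.Iic 0)) (Set.Iic 0) :=
    h1.differentiableOn_iteratedDerivWithin (by exact_mod_cast hm) (uniqueDiffOn_Iic 0)
  have h := (hdOn t ht.le).hasDerivWithinAt
  have he : derivWithin (iteratedDerivWithin m x (Set.Iic 0)) (Set.Iic 0) t
      = iteratedDerivWithin (m+1) x (Set.Iic 0) t :=
    (congrFun iteratedDerivWithin_succ t).symm
  rw [he] at h
  exact h.hasDerivAt (Iic_mem_nhds ht)

lemma x_cont {r : ℕ} {x : ℝ → ℝ} (h1 : ContDiffOn ℝ (r - 1 : ℕ) x (Set.Iic 0))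
    {m : ℕ} (hm : m ≤ r - 1) :
    ContinuousOn (iteratedDerivWithin m x (Set.Iic 0)) (Set.Iic 0) :=
  h1.continuousOn_iteratedDerivWithin (by exact_mod_cast hm) (uniqueDiffOn_Iic 0)

lemma x_mono {r : ℕ} {x : ℝ → ℝ} (hx : MemLrr r x) {m : ℕ} (hm : m ≤ r - 1) :
    MonotoneOn (iteratedDerivWithin m x (Set.Iic 0)) (Set.Iic 0) := by
  obtain ⟨h1, _h2, _h3, h4, h5⟩ := hx
  rcases eq_or_lt_of_le hm with he | hlt
  · rw [he]; exact h5
  · apply monotoneOn_of_deriv_nonneg (convex_Iic 0) (x_cont h1 hm)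
    · rw [interior_Iic]
      intro t ht
      exact (x_hasDeriv h1 (by omega) t ht).differentiableAt.differentiableWithinAt
    · rw [interior_Iic]
      intro t ht
      rw [(x_hasDeriv h1 (by omega) t ht).deriv]
      exact h4 (m+1) (by omega) t (Set.mem_Iic.2 (le_of_lt ht))

lemma mono_tendsto_atBot {f : ℝ → ℝ} (hmono : MonotoneOn f (Set.Iic 0))
    (hnn : ∀ t ∈ Set.Iic (0:ℝ), 0 ≤ f t) :
    ∃ δ, 0 ≤ δ ∧ Filter.Tendsto f Filter.atBot (nhds δ) := by
  set S := f '' Set.Iic 0 with hS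
  have hne : S.Nonempty := ⟨f 0, ⟨0, Set.mem_Iic.2 le_rfl, rfl⟩⟩
  have hbd : BddBelow S := ⟨0, by rintro y ⟨t, ht, rfl⟩; exact hnn t ht⟩
  refine ⟨sInf S, le_csInf hne (by rintro y ⟨t, ht, rfl⟩; exact hnn t ht), ?_⟩
  rw [tendsto_order]
  constructor
  · intro b hb
    rw [Filter.eventually_atBot]
    refine ⟨0, fun t ht => ?_⟩
    exact lt_of_lt_of_le hb (csInf_le hbd ⟨t, Set.mem_Iic.2 ht, rfl⟩)
  · intro b hb
    obtain ⟨y, hyS, hyb⟩ := exists_lt_of_csInf_lt hne hb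
    obtain ⟨t0, ht0, rfl⟩ := hyS
    rw [Filter.eventually_atBot]
    exact ⟨t0, fun t ht => lt_of_le_of_lt (hmono (Set.mem_Iic.2 (le_trans ht (Set.mem_Iic.1 ht0))) ht0 ht) hyb⟩

lemma nrm_eq_value {r m : ℕ} (hmr : m ≠ r) {f : ℝ → ℝ}
    (hmono : MonotoneOn (iteratedDerivWithin m f (Set.Iic 0)) (Set.Iic 0))
    (hnn : ∀ t ∈ Set.Iic (0:ℝ), 0 ≤ iteratedDerivWithin m f (Set.Iic 0) t) :
    nrm r m f = iteratedDerivWithin m f (Set.Iic 0) 0 := by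
  unfold nrm
  rw [if_neg hmr]
  apply IsGreatest.csSup_eq
  constructor
  · exact ⟨0, Set.mem_Iic.2 le_rfl, abs_of_nonneg (hnn 0 (Set.mem_Iic.2 le_rfl))⟩
  · rintro y ⟨t, ht, rfl⟩
    simp only
    rw [abs_of_nonneg (hnn t ht)]
    exact hmono ht (Set.mem_Iic.2 le_rfl) (Set.mem_Iic.1 ht)

end Xside
section LipPart

lemma nrm_top_spline {r s : ℕ} {a : ℕ → ℝ} {l : ℝ}
    (ha : ∀ i j, i < j → j < s → a j < a i) (hapos : ∀ j, j < s → 0 < a j)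
    (hl : 0 < l) (hs : 1 ≤ s) (hr : 2 ≤ r) :
    nrm r r (splineFun r s a l) = l := by
  unfold nrm
  rw [if_pos rfl]
  have hFeq : ∀ t ∈ Set.Iic (0:ℝ), iteratedDerivWithin (r-1) (splineFun r s a l) (Set.Iic 0) t
      = psi r s a l (r-1) t := iter_spline r s a l le_rfl hr
  have lmem : l ∈ {L : ℝ | 0 ≤ L ∧ LipschitzOnWith (Real.toNNReal L)
      (iteratedDerivWithin (r - 1) (splineFun r s a l) (Set.Iic 0)) (Set.Iic 0)} := by
    refine ⟨hl.le, ?_⟩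
    rw [lipschitzOnWith_iff_dist_le_mul]
    intro t1 h1 t2 h2
    rw [Real.dist_eq, Real.dist_eq, hFeq _ h1, hFeq _ h2, Real.coe_toNNReal l hl.le]
    rcases le_total t1 t2 with h | h
    · have ha1 := psi_top_lip ha hl hr h
      have ha2 := psi_mono (r := r) ha hl (m := r-1) h
      rw [abs_of_nonpos (by linarith), abs_of_nonpos (by linarith)]
      linarith
    · have ha1 := psi_top_lip ha hl hr h
      have ha2 := psi_mono (r := r) ha hl (m := r-1) h
      rw [abs_of_nonneg (by linarith), abs_of_nonneg (by linarith)]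
      linarith
  apply le_antisymm
  · exact csInf_le ⟨0, fun y hy => hy.1⟩ lmem
  · apply le_csInf ⟨l, lmem⟩
    rintro L ⟨hL0, hLip⟩
    set c := if 1 < s then -a 1 else 0 with hc
    have hc1 : -a 0 < c := by
      rw [hc]; split_ifs with h1s
      · simp only [neg_lt_neg_iff]; exact ha 0 1 (by omega) h1s
      · simp only [Left.neg_neg_iff]; exact hapos 0 (by omega)
    have hc2 : c ≤ 0 := by
      rw [hc]; split_ifs with h1s
      · simp only [Left.neg_nonpos_iff]; exact (hapos 1 h1s).le
      · exact le_rfl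
    have ha00 : -a 0 ≤ 0 := by linarith [hapos 0 (by omega)]
    have hF1 : iteratedDerivWithin (r-1) (splineFun r s a l) (Set.Iic 0) (-a 0) = 0 := by
      rw [hFeq _ (Set.mem_Iic.2 ha00)]
      exact psi_eq_zero_left ha le_rfl hr le_rfl
    have hslope := psi_piece_slope (r := r) (l := l) ha hr (p := 1) le_rfl hs
      (t1 := -a 0) (t2 := c) (by norm_num) hc1.le (fun h1s => by rw [hc, if_pos h1s]) hc2
    rw [if_pos (by norm_num : Odd 1)] at hslope
    have hdist := (lipschitzOnWith_iff_dist_le_mul.1 hLip) c (Set.mem_Iic.2 hc2)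
      (-a 0) (Set.mem_Iic.2 ha00)
    rw [Real.dist_eq, Real.dist_eq, Real.coe_toNNReal L hL0] at hdist
    rw [hFeq _ (Set.mem_Iic.2 hc2), hF1, sub_zero] at hdist
    have he1 : psi r s a l (r-1) c = l * (c + a 0) := by
      have := psi_eq_zero_left (l := l) ha (le_rfl : r-1 ≤ r-1) hr (le_refl (-a 0))
      rw [this] at hslope
      rw [sub_zero] at hslope
      rw [hslope]; ring
    rw [he1] at hdist
    have habs1 : |l * (c + a 0)| = l * (c + a 0) := abs_of_nonneg (by nlinarith)
    have habs2 : |c - -a 0| = c + a 0 := by rw [abs_of_nonneg (by linarith)]; ring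
    rw [habs1, habs2] at hdist
    have hpos : 0 < c + a 0 := by linarith
    exact le_of_mul_le_mul_right (by linarith) hpos

lemma lip_of_nrm {r : ℕ} {x : ℝ → ℝ} {l : ℝ} (hl : 0 < l)
    (hne : ∃ L : NNReal, LipschitzOnWith L (iteratedDerivWithin (r-1) x (Set.Iic 0)) (Set.Iic 0))
    (hnrm : nrm r r x = l) :
    ∀ t1 ∈ Set.Iic (0:ℝ), ∀ t2 ∈ Set.Iic (0:ℝ),
      |iteratedDerivWithin (r-1) x (Set.Iic 0) t1 - iteratedDerivWithin (r-1) x (Set.Iic 0) t2|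
        ≤ l * |t1 - t2| := by
  intro t1 h1 t2 h2
  unfold nrm at hnrm
  rw [if_pos rfl] at hnrm
  obtain ⟨L0, hL0⟩ := hne
  have hSne : Set.Nonempty {L : ℝ | 0 ≤ L ∧ LipschitzOnWith (Real.toNNReal L)
      (iteratedDerivWithin (r - 1) x (Set.Iic 0)) (Set.Iic 0)} :=
    ⟨(L0 : ℝ), L0.coe_nonneg, by rwa [Real.toNNReal_coe]⟩
  rcases eq_or_ne t1 t2 with he | hne2
  · subst he; simp
  have habs : 0 < |t1 - t2| := abs_pos.2 (sub_ne_zero.2 hne2)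
  by_contra hcon
  push_neg at hcon
  set d := |iteratedDerivWithin (r-1) x (Set.Iic 0) t1 -
    iteratedDerivWithin (r-1) x (Set.Iic 0) t2| with hd
  set ε := (d - l * |t1 - t2|) / |t1 - t2| with hε
  have hεpos : 0 < ε := div_pos (by linarith) habs
  have hlt : sInf {L : ℝ | 0 ≤ L ∧ LipschitzOnWith (Real.toNNReal L)
      (iteratedDerivWithin (r - 1) x (Set.Iic 0)) (Set.Iic 0)} < l + ε := by
    rw [hnrm]; linarith
  obtain ⟨L, hLS, hLlt⟩ := exists_lt_of_csInf_lt hSne hlt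
  have hdist := (lipschitzOnWith_iff_dist_le_mul.1 hLS.2) t1 h1 t2 h2
  rw [Real.dist_eq, Real.dist_eq] at hdist
  have hcoe : (Real.toNNReal L : ℝ) = L := Real.coe_toNNReal L hLS.1
  rw [hcoe] at hdist
  have : d ≤ L * |t1 - t2| := hdist
  have hfin : L * |t1 - t2| < (l + ε) * |t1 - t2| := by
    apply mul_lt_mul_of_pos_right hLlt habs
  have hεeq : (l + ε) * |t1 - t2| = d := by
    rw [hε]; field_simp
    ring
  linarith

end LipPart
/-- The difference between the `m`-th derivatives of `x` and the spline. -/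
noncomputable def Dfun (r s : ℕ) (a : ℕ → ℝ) (l : ℝ) (x : ℝ → ℝ) (m : ℕ) : ℝ → ℝ :=
  fun t => iteratedDerivWithin m x (Set.Iic 0) t - psi r s a l m t

/-- Lemma 1: if `x ∈ L^{r,r}_{∞,∞}(ℝ₋)` and a spline `φ ∈ Φ_{r,d-2}` have equal
norms `‖x^{(k_i)}‖ = ‖φ^{(k_i)}‖` for `i = 2,…,d` (with `k_d = r`), then
`‖x^{(k_1)}‖ ≥ ‖φ^{(k_1)}‖`, with equality only if `x^{(k_1)} ≡ φ^{(k_1)}` on `ℝ₋`. -/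
theorem stmt_9 (r d : ℕ) (k : ℕ → ℕ)
    (hmono : ∀ i j, 1 ≤ i → i < j → j ≤ d → k i < k j)
    (hkd : k d = r)
    (x φ : ℝ → ℝ) (hx : MemLrr r x) (hφ : IsSpline r (d - 2) φ)
    (heq : ∀ i, 2 ≤ i → i ≤ d → nrm r (k i) x = nrm r (k i) φ) :
    nrm r (k 1) φ ≤ nrm r (k 1) x ∧
    (nrm r (k 1) x = nrm r (k 1) φ →
      Set.EqOn (iteratedDerivWithin (k 1) x (Set.Iic 0))
        (iteratedDerivWithin (k 1) φ (Set.Iic 0)) (Set.Iic 0)) := by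
  obtain ⟨s, hs1, hs2, a, l, ha, hapos, hl, hφeq⟩ := hφ
  subst hφeq
  have hd3 : 3 ≤ d := by omega
  have hk12 : k 1 < k 2 := hmono 1 2 le_rfl (by omega) (by omega)
  have hk2d : k 2 < r := by
    have := hmono 2 d (by omega) (by omega) le_rfl
    omega
  have hr2 : 2 ≤ r := by omega
  have hk1 : k 1 ≤ r - 2 := by omega
  have hki : ∀ i, 2 ≤ i → i ≤ d - 1 → k i ≤ r - 1 := by
    intro i h2 hd1
    have := hmono i d (by omega) (by omega) le_rfl
    omega
  -- norm characterizations
  have hXval : ∀ m, m ≤ r - 1 → nrm r m x = iteratedDerivWithin m x (Set.Iic 0) 0 :=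
    fun m hm => nrm_eq_value (by omega) (x_mono hx hm)
      (fun t ht => hx.2.2.2.1 m (by omega) t ht)
  have hφEq : ∀ m, m ≤ r - 1 → Set.EqOn
      (iteratedDerivWithin m (splineFun r s a l) (Set.Iic 0)) (psi r s a l m) (Set.Iic 0) :=
    fun m hm => iter_spline r s a l hm hr2
  have hφval : ∀ m, m ≤ r - 1 → nrm r m (splineFun r s a l) = psi r s a l m 0 := by
    intro m hm
    have h := nrm_eq_value (r := r) (m := m) (f := splineFun r s a l) (by omega)
      (fun t1 h1 t2 h2 h12 => by
        rw [hφEq m hm h1, hφEq m hm h2]; exact psi_mono (r := r) ha hl h12)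
      (fun t ht => by rw [hφEq m hm ht]; exact psi_nonneg ha hl t)
    rw [h, hφEq m hm (Set.mem_Iic.2 le_rfl)]
  have hD0 : ∀ i, 2 ≤ i → i ≤ d - 1 →
      iteratedDerivWithin (k i) x (Set.Iic 0) 0 = psi r s a l (k i) 0 := by
    intro i h2 hd1
    have h := heq i h2 (by omega)
    rwa [hXval (k i) (hki i h2 hd1), hφval (k i) (hki i h2 hd1)] at h
  have hLipl : nrm r r x = l := by
    have h := heq d (by omega) le_rfl
    rw [hkd, nrm_top_spline ha hapos hl hs1 hr2] at h
    exact h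
  have hXlip := lip_of_nrm hl hx.2.1 hLipl
  -- properties of the difference functions
  have hDcont : ∀ m, m ≤ r - 1 → ContinuousOn (Dfun r s a l x m) (Set.Iic 0) :=
    fun m hm => (x_cont hx.1 hm).sub (psi_continuous r s a l m).continuousOn
  have hDd : ∀ m, m + 1 ≤ r - 1 → ∀ t < (0:ℝ),
      HasDerivAt (Dfun r s a l x m) (Dfun r s a l x (m+1) t) t :=
    fun m hm t ht => (x_hasDeriv hx.1 hm t ht).sub (hasDerivAt_psi r s a l (by omega) t)
  have hDlim : ∀ m, m ≤ r - 1 → ∃ δ, 0 ≤ δ ∧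
      Filter.Tendsto (Dfun r s a l x m) Filter.atBot (nhds δ) := by
    intro m hm
    obtain ⟨δ, hδ0, hδt⟩ := mono_tendsto_atBot (x_mono hx hm)
      (fun t ht => hx.2.2.2.1 m (by omega) t ht)
    have hψ : Filter.Tendsto (fun t => psi r s a l m t) Filter.atBot (nhds 0) := by
      apply Filter.Tendsto.congr' _ tendsto_const_nhds
      filter_upwards [Filter.eventually_le_atBot (-a 0)] with t ht
      exact (psi_eq_zero_left ha hm hr2 ht).symm
    refine ⟨δ, hδ0, ?_⟩
    have := hδt.sub hψ
    rw [sub_zero] at this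
    exact this
  have hpiece : ∀ p, 1 ≤ p → p ≤ s → ∀ t1 t2, -a (p-1) ≤ t1 → t1 ≤ t2 →
      (p < s → t2 ≤ -a p) → t2 ≤ 0 →
      (if Odd p then Dfun r s a l x (r-1) t2 ≤ Dfun r s a l x (r-1) t1
        else Dfun r s a l x (r-1) t1 ≤ Dfun r s a l x (r-1) t2) := by
    intro p hp hps t1 t2 h1 h12 h2 ht2
    have hsl := psi_piece_slope (r := r) (l := l) ha hr2 hp hps h1 h12 h2 ht2
    have ht1 : t1 ≤ 0 := le_trans h12 ht2
    rcases Nat.even_or_odd p with he | ho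
    · rw [if_neg (Nat.not_odd_iff_even.2 he)] at hsl ⊢
      have hxm := hx.2.2.2.2 (Set.mem_Iic.2 ht1) (Set.mem_Iic.2 ht2) h12
      unfold Dfun
      linarith [sub_eq_zero.1 hsl]
    · rw [if_pos ho] at hsl ⊢
      have habs := hXlip t2 (Set.mem_Iic.2 ht2) t1 (Set.mem_Iic.2 ht1)
      rw [abs_of_nonneg (by linarith : (0:ℝ) ≤ t2 - t1)] at habs
      have hXd : iteratedDerivWithin (r-1) x (Set.Iic 0) t2
          - iteratedDerivWithin (r-1) x (Set.Iic 0) t1 ≤ l * (t2 - t1) :=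
        le_trans (le_abs_self _) habs
      unfold Dfun
      linarith
  have hzl : ∀ t, t ≤ -a 0 → 0 ≤ Dfun r s a l x (r-1) t := by
    intro t ht
    have ht0 : t ≤ 0 := le_trans ht (by linarith [hapos 0 (by omega)])
    unfold Dfun
    rw [psi_eq_zero_left ha le_rfl hr2 ht, sub_zero]
    exact hx.2.2.2.1 (r-1) (by omega) t (Set.mem_Iic.2 ht0)
  -- the upward machine
  have machine : ∀ (n0 m0 : ℕ), 1 ≤ n0 → AltOn (Dfun r s a l x m0) n0 →
      ∀ m, m0 ≤ m → m ≤ r - 1 →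
      AltOn (Dfun r s a l x m)
        (n0 + ((Finset.Icc 2 (d-1)).filter (fun i => m0 ≤ k i ∧ k i < m)).card) := by
    intro n0 m0 hn0 halt m hm0m
    induction m, hm0m using Nat.le_induction with
    | base =>
      intro _
      have hempt : ((Finset.Icc 2 (d-1)).filter (fun i => m0 ≤ k i ∧ k i < m0)) = ∅ :=
        Finset.filter_false_of_mem (fun i _ => by omega)
      rw [hempt, Finset.card_empty, Nat.add_zero]
      exact halt
    | succ m hm ih =>
      intro hmr1
      have ihh := ih (by omega)
      obtain ⟨δ, hδ0, hδt⟩ := hDlim m (by omega)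
      by_cases hex : ∃ i, 2 ≤ i ∧ i ≤ d - 1 ∧ k i = m
      · obtain ⟨i, hi2, hid, hkim⟩ := hex
        have hD00 : Dfun r s a l x m 0 = 0 := by
          unfold Dfun
          rw [sub_eq_zero, ← hkim]
          exact hD0 i hi2 hid
        have hstep := alt_up_bonus (hDcont m (by omega)) (hDd m (by omega)) hδt hδ0 hD00
          (by omega) ihh
        have hset : ((Finset.Icc 2 (d-1)).filter (fun i' => m0 ≤ k i' ∧ k i' < m+1))
            = insert i ((Finset.Icc 2 (d-1)).filter (fun i' => m0 ≤ k i' ∧ k i' < m)) := by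
          ext j
          simp only [Finset.mem_insert, Finset.mem_filter, Finset.mem_Icc]
          constructor
          · rintro ⟨⟨hj2, hjd⟩, hm0j, hjm⟩
            rcases Nat.lt_or_ge (k j) m with h | h
            · exact Or.inr ⟨⟨hj2, hjd⟩, hm0j, h⟩
            · left
              have hkj : k j = m := by omega
              by_contra hne
              rcases Nat.lt_or_ge j i with hji | hij
              · have := hmono j i (by omega) hji (by omega); omega
              · have := hmono i j (by omega) (by omega) (by omega); omega
          · rintro (rfl | ⟨⟨hj2, hjd⟩, hm0j, hjm⟩)
            · refine ⟨⟨hi2, hid⟩, by omega, by omega⟩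
            · exact ⟨⟨hj2, hjd⟩, hm0j, by omega⟩
        have hnotmem : i ∉ ((Finset.Icc 2 (d-1)).filter (fun i' => m0 ≤ k i' ∧ k i' < m)) := by
          simp only [Finset.mem_filter, Finset.mem_Icc]
          rintro ⟨_, _, hcon⟩
          omega
        have hcard : ((Finset.Icc 2 (d-1)).filter (fun i' => m0 ≤ k i' ∧ k i' < m+1)).card
            = ((Finset.Icc 2 (d-1)).filter (fun i' => m0 ≤ k i' ∧ k i' < m)).card + 1 := by
          rw [hset, Finset.card_insert_of_notMem hnotmem]
        rw [hcard, ← Nat.add_assoc]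
        exact hstep
      · have hset : ((Finset.Icc 2 (d-1)).filter (fun i' => m0 ≤ k i' ∧ k i' < m+1))
            = ((Finset.Icc 2 (d-1)).filter (fun i' => m0 ≤ k i' ∧ k i' < m)) := by
          ext j
          simp only [Finset.mem_filter, Finset.mem_Icc]
          constructor
          · rintro ⟨⟨hj2, hjd⟩, hm0j, hjm⟩
            refine ⟨⟨hj2, hjd⟩, hm0j, ?_⟩
            rcases Nat.lt_or_ge (k j) m with h | h
            · exact h
            · exfalso; exact hex ⟨j, hj2, hjd, by omega⟩
          · rintro ⟨⟨hj2, hjd⟩, hm0j, hjm⟩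
            exact ⟨⟨hj2, hjd⟩, hm0j, by omega⟩
        rw [hset]
        exact alt_up (hDcont m (by omega)) (hDd m (by omega)) hδt hδ0 (by omega) ihh
  -- evaluation of the count at the top level
  have hcount : ∀ m0, m0 ≤ k 2 →
      ((Finset.Icc 2 (d-1)).filter (fun i => m0 ≤ k i ∧ k i < r-1)).card
        = if k (d-1) = r-1 then d-3 else d-2 := by
    intro m0 hm0
    have hcond : ∀ i, 2 ≤ i → i ≤ d-1 → m0 ≤ k i := by
      intro i h2 hd1
      rcases eq_or_lt_of_le h2 with he | hlt'
      · rw [← he]; exact hm0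
      · exact le_trans hm0 (hmono 2 i (by omega) hlt' (by omega)).le
    split_ifs with hlast
    · have hset : ((Finset.Icc 2 (d-1)).filter (fun i => m0 ≤ k i ∧ k i < r-1))
          = Finset.Icc 2 (d-2) := by
        ext j
        simp only [Finset.mem_filter, Finset.mem_Icc]
        constructor
        · rintro ⟨⟨h2j, hjd⟩, _, hjr⟩
          refine ⟨h2j, ?_⟩
          by_contra hcon
          have hjeq : j = d - 1 := by omega
          rw [hjeq, hlast] at hjr
          omega
        · rintro ⟨h2j, hjd2⟩
          have hjd : j ≤ d - 1 := by omega
          refine ⟨⟨h2j, hjd⟩, hcond j h2j hjd, ?_⟩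
          have := hmono j (d-1) (by omega) (by omega) (by omega)
          omega
      rw [hset, Nat.card_Icc]
      omega
    · have hset : ((Finset.Icc 2 (d-1)).filter (fun i => m0 ≤ k i ∧ k i < r-1))
          = Finset.Icc 2 (d-1) := by
        ext j
        simp only [Finset.mem_filter, Finset.mem_Icc]
        constructor
        · rintro ⟨hj, _, _⟩; exact hj
        · rintro ⟨h2j, hjd⟩
          refine ⟨⟨h2j, hjd⟩, hcond j h2j hjd, ?_⟩
          rcases eq_or_lt_of_le hjd with he | hlt'
          · have := hki (d-1) (by omega) le_rfl
            rw [he]; omega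
          · have h1 := hmono j (d-1) (by omega) hlt' (by omega)
            have h2 := hki (d-1) (by omega) le_rfl
            omega
      rw [hset, Nat.card_Icc]
      omega
    -- top-level contradiction helper
  have hD0top : k (d-1) = r - 1 → Dfun r s a l x (r-1) 0 = 0 := by
    intro hlast
    have := hD0 (d-1) (by omega) le_rfl
    rw [hlast] at this
    unfold Dfun
    rw [sub_eq_zero]
    exact this
  have contra : ∀ m0, k 1 ≤ m0 → m0 ≤ k 2 → ∀ n0, 1 ≤ n0 →
      (k (d-1) = r - 1 → n0 + (d-3) ≤ s - 1) →
      (k (d-1) ≠ r - 1 → n0 + (d-2) ≤ s) → False := by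
    intro m0 _ _ n0 _ hc1 hc2
    by_cases hlast : k (d-1) = r - 1
    · have := hc1 hlast; omega
    · have := hc2 hlast; omega
  -- final contradiction machinery packaged
  have final : ∀ m0, m0 ≤ k 2 → ∀ n0, 1 ≤ n0 → AltOn (Dfun r s a l x m0) n0 →
      m0 ≤ r - 1 → False := by
    intro m0 hm0 n0 hn0 halt hm0r
    have hfin := machine n0 m0 hn0 halt (r-1) hm0r le_rfl
    rw [hcount m0 hm0] at hfin
    obtain ⟨hb1, hb2⟩ := alt_bound ha hs1 hpiece hzl hfin
    by_cases hlast : k (d-1) = r - 1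
    · rw [if_pos hlast] at hb1 hb2
      have := hb2 (hD0top hlast)
      omega
    · rw [if_neg hlast] at hb1
      omega
  constructor
  · -- the inequality
    rw [hXval (k 1) (by omega), hφval (k 1) (by omega)]
    by_contra hcon
    push_neg at hcon
    have halt : AltOn (Dfun r s a l x (k 1)) 1 := by
      refine ⟨fun _ => 0, fun i hi => by omega, fun i hi => le_rfl, fun i hi => ?_⟩
      have : i = 0 := by omega
      subst this
      rw [if_pos (by norm_num : Even 0)]
      unfold Dfun
      linarith
    exact final (k 1) (by omega) 1 le_rfl halt (by omega)
  · -- the equality case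
    intro heqn t ht
    have hD0k1 : Dfun r s a l x (k 1) 0 = 0 := by
      rw [hXval (k 1) (by omega), hφval (k 1) (by omega)] at heqn
      unfold Dfun
      rw [sub_eq_zero]
      exact heqn
    rw [hφEq (k 1) (by omega) ht]
    by_contra hnet
    obtain ⟨δ, hδ0, hδt⟩ := hDlim (k 1) (by omega)
    rcases (sub_ne_zero.2 hnet).lt_or_gt with hneg | hpos
    · -- D (k 1) t < 0 : bonus step then machine from k 1 + 1 with n0 = 2
      have halt : AltOn (Dfun r s a l x (k 1)) 1 := by
        refine ⟨fun _ => t, fun i hi => by omega, fun i hi => ht, fun i hi => ?_⟩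
        have : i = 0 := by omega
        subst this
        rw [if_pos (by norm_num : Even 0)]
        exact hneg
      have hb := alt_up_bonus (hDcont (k 1) (by omega)) (hDd (k 1) (by omega)) hδt hδ0
        hD0k1 le_rfl halt
      exact final (k 1 + 1) (by omega) 2 (by omega) hb (by omega)
    · -- D (k 1) t > 0 : one MVT step towards 0
      have htlt : t < 0 := by
        rcases lt_or_eq_of_le (Set.mem_Iic.1 ht) with h | h
        · exact h
        · exfalso
          rw [h] at hpos
          unfold Dfun at hD0k1
          rw [sub_eq_zero] at hD0k1
          rw [hD0k1, sub_self] at hpos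
          exact lt_irrefl _ hpos
      obtain ⟨c, hc1, hc2, hc3⟩ := mvt_step (hDcont (k 1) (by omega))
        (hDd (k 1) (by omega)) htlt le_rfl
      have hcneg : Dfun r s a l x (k 1 + 1) c < 0 := by
        rw [hc3, hD0k1]
        apply div_neg_of_neg_of_pos
        · unfold Dfun
          linarith
        · linarith
      have halt : AltOn (Dfun r s a l x (k 1 + 1)) 1 := by
        refine ⟨fun _ => c, fun i hi => by omega, fun i hi => by linarith, fun i hi => ?_⟩
        have : i = 0 := by omega
        subst this
        rw [if_pos (by norm_num : Even 0)]
        exact hcneg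
      exact final (k 1 + 1) (by omega) 1 le_rfl halt (by omega)
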